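/- The Bianchi I metric g = -dt² + a(t)² dz² + b(t)²(dr² + r² dφ²) with a(t) = (α-t)^{-1/3}(β-t) and b(t) = (α-t)^{2/3} is a solution of the Einstein equations with dust source: its Einstein tensor satisfies G_{ab} = ρ u_a u_b for some nonnegative function ρ (on the region 0 ≤ t < min{α,β}), where u = ∂_t. -/

import Mathlib

noncomputable section

namespace BianchiIDust

/-- Points of the spacetime, in coordinates `x = (t, r, φ, z)`. -/
abbrev Pt := Fin 4 → ℝ

/-- Metric: a matrix-valued function of the point. -/
abbrev Metric := Pt → Matrix (Fin 4) (Fin 4) ℝ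

/-- Partial derivative `∂ᵢ f` of a scalar function. -/
def pd (i : Fin 4) (f : Pt → ℝ) (x : Pt) : ℝ := fderiv ℝ f x (Pi.single i 1)

/-- Inverse metric `g^{ab}`. -/
def ginv (g : Metric) (x : Pt) : Matrix (Fin 4) (Fin 4) ℝ := (g x)⁻¹

/-- Christoffel symbols `Γ^a_{bc}` of the Levi-Civita connection of `g`. -/
def christoffel (g : Metric) (x : Pt) (a b c : Fin 4) : ℝ :=
  (1 / 2) * ∑ d, ginv g x a d *
    (pd b (fun y => g y d c) x + pd c (fun y => g y d b) x - pd d (fun y => g y b c) x)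

/-- Riemann curvature tensor `R^a_{bcd}`. -/
def riemann (g : Metric) (x : Pt) (a b c d : Fin 4) : ℝ :=
  pd c (fun y => christoffel g y a d b) x - pd d (fun y => christoffel g y a c b) x
    + ∑ e, (christoffel g x a c e * christoffel g x e d b
      - christoffel g x a d e * christoffel g x e c b)

/-- Ricci tensor `R_{bd} = R^a_{bad}`. -/
def ricci (g : Metric) (x : Pt) (b d : Fin 4) : ℝ := ∑ a, riemann g x a b a d

/-- Scalar curvature `R = g^{bd} R_{bd}`. -/
def scalarCurv (g : Metric) (x : Pt) : ℝ := ∑ b, ∑ d, ginv g x b d * ricci g x b d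

/-- Einstein tensor `G_{ab} = R_{ab} - (1/2) R g_{ab}`. -/
def einstein (g : Metric) (x : Pt) : Matrix (Fin 4) (Fin 4) ℝ :=
  Matrix.of fun a b => ricci g x a b - (1 / 2) * scalarCurv g x * g x a b

/-- The scale factor `a(t) = (α-t)^{-1/3}(β-t)`. -/
def aBI (α β t : ℝ) : ℝ := (α - t) ^ (-(1 : ℝ) / 3) * (β - t)

/-- The scale factor `b(t) = (α-t)^{2/3}`. -/
def bBI (α t : ℝ) : ℝ := (α - t) ^ ((2 : ℝ) / 3)

/-- The Bianchi I metric `g = -dt² + a(t)² dz² + b(t)²(dr² + r² dφ²)`, in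
cylindrical coordinates `(t, r, φ, z)`. -/
def gBianchiI (α β : ℝ) : Metric := fun x =>
  Matrix.diagonal ![-1, bBI α (x 0) ^ 2, bBI α (x 0) ^ 2 * (x 1) ^ 2, aBI α β (x 0) ^ 2]

/-- The unit timelike covector `u_a` corresponding to `u = ∂_t`. -/
def uCov : Fin 4 → ℝ := ![-1, 0, 0, 0]

lemma pd_const (i : Fin 4) (x : Pt) (k : ℝ) : pd i (fun _ => k) x = 0 := by
  simp [pd]

lemma pd_congr_open {O : Set Pt} (hO : IsOpen O) {x : Pt} (hx : x ∈ O)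
    {f h : Pt → ℝ} (hfh : ∀ y ∈ O, f y = h y) (i : Fin 4) : pd i f x = pd i h x := by
  unfold pd
  rw [Filter.EventuallyEq.fderiv_eq]
  filter_upwards [hO.mem_nhds hx] with y hy using hfh y hy

lemma pd_comp0 {F : ℝ → ℝ} {F' : ℝ} {x : Pt} (h : HasDerivAt F F' (x 0)) (i : Fin 4) :
    pd i (fun y : Pt => F (y 0)) x = if i = 0 then F' else 0 := by
  have hp := hasFDerivAt_apply (𝕜 := ℝ) (0 : Fin 4) x
  have h2 := h.hasFDerivAt.comp x hp
  simp only [Function.comp_def] at h2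
  rw [pd, h2.fderiv]
  by_cases hi : i = 0 <;>
    simp [hi, Pi.single_apply, ContinuousLinearMap.proj_apply]

lemma pd_comp1 {F : ℝ → ℝ} {F' : ℝ} {x : Pt} (h : HasDerivAt F F' (x 1)) (i : Fin 4) :
    pd i (fun y : Pt => F (y 1)) x = if i = 1 then F' else 0 := by
  have hp := hasFDerivAt_apply (𝕜 := ℝ) (1 : Fin 4) x
  have h2 := h.hasFDerivAt.comp x hp
  simp only [Function.comp_def] at h2
  rw [pd, h2.fderiv]
  by_cases hi : i = 1 <;>
    simp [hi, Pi.single_apply, ContinuousLinearMap.proj_apply]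

lemma diffAt_comp0 {F : ℝ → ℝ} {x : Pt} (h : DifferentiableAt ℝ F (x 0)) :
    DifferentiableAt ℝ (fun y : Pt => F (y 0)) x :=
  h.comp x (hasFDerivAt_apply (𝕜 := ℝ) (0 : Fin 4) x).differentiableAt

lemma diffAt_comp1 {F : ℝ → ℝ} {x : Pt} (h : DifferentiableAt ℝ F (x 1)) :
    DifferentiableAt ℝ (fun y : Pt => F (y 1)) x :=
  h.comp x (hasFDerivAt_apply (𝕜 := ℝ) (1 : Fin 4) x).differentiableAt

lemma pd_mul {f g : Pt → ℝ} {x : Pt} (hf : DifferentiableAt ℝ f x)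
    (hg : DifferentiableAt ℝ g x) (i : Fin 4) :
    pd i (fun y => f y * g y) x = pd i f x * g x + f x * pd i g x := by
  unfold pd
  rw [fderiv_fun_mul hf hg]
  simp
  ring

def cB (α t : ℝ) : ℝ := (α - t) ^ ((1:ℝ)/3)
lemma cB_pos {α t : ℝ} (ht : t < α) : 0 < cB α t :=
  Real.rpow_pos_of_pos (by linarith) _

lemma cB_pow {α t : ℝ} (ht : t < α) (n : ℕ) : cB α t ^ n = (α - t) ^ ((n : ℝ)/3) := by
  have hs : (0:ℝ) ≤ α - t := by linarith
  rw [cB, ← Real.rpow_natCast ((α - t) ^ ((1:ℝ)/3)) n, ← Real.rpow_mul hs]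
  ring_nf

lemma cB_cube {α t : ℝ} (ht : t < α) : cB α t ^ 3 = α - t := by
  rw [cB_pow ht 3]
  norm_num

lemma bBI_sq {α t : ℝ} (ht : t < α) : bBI α t ^ 2 = cB α t ^ 4 := by
  have hs : (0:ℝ) ≤ α - t := by linarith
  rw [cB_pow ht 4, bBI, ← Real.rpow_natCast ((α - t) ^ ((2:ℝ)/3)) 2, ← Real.rpow_mul hs]
  norm_num

lemma aBI_sq {α β t : ℝ} (ht : t < α) : aBI α β t ^ 2 = (β - t) ^ 2 / cB α t ^ 2 := by
  have hs : (0:ℝ) ≤ α - t := by linarith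
  have h1 : (α - t) ^ (-(1 : ℝ) / 3) = (cB α t)⁻¹ := by
    rw [cB, ← Real.rpow_neg hs]
    norm_num
  rw [aBI, h1, mul_pow, inv_pow]
  ring

lemma hasDerivAt_cB {α t : ℝ} (ht : t < α) :
    HasDerivAt (cB α) (-1 / (3 * cB α t ^ 2)) t := by
  have hs : (0:ℝ) < α - t := by linarith
  have h1 : HasDerivAt (fun s : ℝ => s ^ ((1:ℝ)/3)) ((1/3) * (α - t) ^ ((1:ℝ)/3 - 1)) (α - t) :=
    Real.hasDerivAt_rpow_const (Or.inl (ne_of_gt hs))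
  have h2 : HasDerivAt (fun u : ℝ => α - u) (-1) t := by
    simpa using (hasDerivAt_id t).const_sub α
  have h3 := h1.comp t h2
  have he : (1/3) * (α - t) ^ ((1:ℝ)/3 - 1) * (-1) = -1 / (3 * cB α t ^ 2) := by
    have h4 : cB α t ^ 2 = (α - t) ^ ((2:ℝ)/3) := cB_pow ht 2
    have h5 : (α - t) ^ ((1:ℝ)/3 - 1) = ((α - t) ^ ((2:ℝ)/3))⁻¹ := by
      rw [← Real.rpow_neg hs.le]
      norm_num
    rw [h4, h5]
    have : (α - t) ^ ((2:ℝ)/3) ≠ 0 := ne_of_gt (Real.rpow_pos_of_pos hs _)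
    (try field_simp) <;> ring
  rw [← he]
  exact h3

def U (α β : ℝ) : Set Pt := {y | y 0 < α ∧ y 0 < β ∧ 0 < y 1}

lemma isOpen_U (α β : ℝ) : IsOpen (U α β) := by
  have h0 : Continuous fun y : Pt => y 0 := continuous_apply 0
  have h1 : Continuous fun y : Pt => y 1 := continuous_apply 1
  exact ((isOpen_lt h0 continuous_const).inter
    ((isOpen_lt h0 continuous_const).inter (isOpen_lt continuous_const h1)))

lemma isOpen_Ut (α : ℝ) : IsOpen {y : Pt | y 0 < α} :=
  isOpen_lt (continuous_apply 0) continuous_const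

lemma gE00 (α β : ℝ) (y : Pt) : gBianchiI α β y 0 0 = -1 := by simp [gBianchiI]
lemma gE01 (α β : ℝ) (y : Pt) : gBianchiI α β y 0 1 = 0 := by simp [gBianchiI]
lemma gE02 (α β : ℝ) (y : Pt) : gBianchiI α β y 0 2 = 0 := by simp [gBianchiI]
lemma gE03 (α β : ℝ) (y : Pt) : gBianchiI α β y 0 3 = 0 := by simp [gBianchiI]
lemma gE10 (α β : ℝ) (y : Pt) : gBianchiI α β y 1 0 = 0 := by simp [gBianchiI]
lemma gE11 (α β : ℝ) (y : Pt) : gBianchiI α β y 1 1 = bBI α (y 0) ^ 2 := by simp [gBianchiI]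
lemma gE12 (α β : ℝ) (y : Pt) : gBianchiI α β y 1 2 = 0 := by simp [gBianchiI]
lemma gE13 (α β : ℝ) (y : Pt) : gBianchiI α β y 1 3 = 0 := by simp [gBianchiI]
lemma gE20 (α β : ℝ) (y : Pt) : gBianchiI α β y 2 0 = 0 := by simp [gBianchiI]
lemma gE21 (α β : ℝ) (y : Pt) : gBianchiI α β y 2 1 = 0 := by simp [gBianchiI]
lemma gE22 (α β : ℝ) (y : Pt) : gBianchiI α β y 2 2 = bBI α (y 0) ^ 2 * (y 1) ^ 2 := by simp [gBianchiI]
lemma gE23 (α β : ℝ) (y : Pt) : gBianchiI α β y 2 3 = 0 := by simp [gBianchiI]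
lemma gE30 (α β : ℝ) (y : Pt) : gBianchiI α β y 3 0 = 0 := by simp [gBianchiI]
lemma gE31 (α β : ℝ) (y : Pt) : gBianchiI α β y 3 1 = 0 := by simp [gBianchiI]
lemma gE32 (α β : ℝ) (y : Pt) : gBianchiI α β y 3 2 = 0 := by simp [gBianchiI]
lemma gE33 (α β : ℝ) (y : Pt) : gBianchiI α β y 3 3 = aBI α β (y 0) ^ 2 := by simp [gBianchiI]

variable {α β : ℝ} {x : Pt}

lemma hasDerivAt_c4 (ht : x 0 < α) :
    HasDerivAt (fun t => cB α t ^ 4) (-(4/3) * cB α (x 0)) (x 0) := by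
  have h := (hasDerivAt_cB ht).fun_pow 4
  refine h.congr_deriv ?_
  have hc := (cB_pos ht).ne'
  field_simp
  ring

lemma pd_g11 (ht : x 0 < α) (i : Fin 4) :
    pd i (fun y : Pt => bBI α (y 0) ^ 2) x =
      if i = 0 then -(4/3) * cB α (x 0) else 0 := by
  rw [pd_congr_open (isOpen_Ut α) ht
    (fun y (hy : y 0 < α) => by simpa using bBI_sq (α := α) (t := y 0) hy)]
  exact pd_comp0 (hasDerivAt_c4 ht) i

lemma pd_g22 (ht : x 0 < α) (i : Fin 4) :
    pd i (fun y : Pt => bBI α (y 0) ^ 2 * (y 1) ^ 2) x =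
      (if i = 0 then -(4/3) * cB α (x 0) else 0) * (x 1) ^ 2
        + cB α (x 0) ^ 4 * (if i = 1 then 2 * x 1 else 0) := by
  rw [pd_congr_open (isOpen_Ut α) ht
    (fun y (hy : y 0 < α) => by rw [bBI_sq hy])]
  have hf : DifferentiableAt ℝ (fun y : Pt => cB α (y 0) ^ 4) x :=
    diffAt_comp0 (hasDerivAt_c4 ht).differentiableAt
  have hg : DifferentiableAt ℝ (fun y : Pt => (y 1) ^ 2) x :=
    diffAt_comp1 (hasDerivAt_pow 2 (x 1)).differentiableAt
  have h := pd_mul hf hg i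
  rw [h, pd_comp0 (hasDerivAt_c4 ht) i, pd_comp1 (hasDerivAt_pow 2 (x 1)) i]
  norm_num

lemma hasDerivAt_a2 (ht : x 0 < α) (htb : x 0 < β) :
    HasDerivAt (fun t => (β - t) ^ 2 / cB α t ^ 2)
      (-2 * (β - x 0) / cB α (x 0) ^ 2 + (2/3) * (β - x 0) ^ 2 / cB α (x 0) ^ 5) (x 0) := by
  have h1 : HasDerivAt (fun t : ℝ => (β - t) ^ 2) (2 * (β - x 0) ^ 1 * (-1)) (x 0) := by
    have := ((hasDerivAt_id (x 0)).const_sub β).fun_pow 2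
    simpa using this
  have h2 := (hasDerivAt_cB ht).fun_pow 2
  have hc := (cB_pos ht).ne'
  have hne : cB α (x 0) ^ 2 ≠ 0 := pow_ne_zero _ hc
  have h := h1.fun_div h2 hne
  refine h.congr_deriv ?_
  field_simp
  ring

lemma pd_g33 (ht : x 0 < α) (htb : x 0 < β) (i : Fin 4) :
    pd i (fun y : Pt => aBI α β (y 0) ^ 2) x =
      if i = 0 then -2 * (β - x 0) / cB α (x 0) ^ 2 + (2/3) * (β - x 0) ^ 2 / cB α (x 0) ^ 5
      else 0 := by
  rw [pd_congr_open (isOpen_Ut α) ht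
    (fun y (hy : y 0 < α) => by simpa using aBI_sq (α := α) (β := β) (t := y 0) hy)]
  exact pd_comp0 (hasDerivAt_a2 ht htb) i

lemma ginv_eq (hx : x ∈ U α β) :
    ginv (gBianchiI α β) x = Matrix.diagonal
      ![-1, (cB α (x 0) ^ 4)⁻¹, (cB α (x 0) ^ 4 * (x 1) ^ 2)⁻¹,
        cB α (x 0) ^ 2 / (β - x 0) ^ 2] := by
  obtain ⟨ht, htb, hr⟩ := hx
  have hc := (cB_pos ht).ne'
  have hw : β - x 0 ≠ 0 := by simp only [sub_ne_zero]; exact (ne_of_lt htb).symm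
  have hrne : x 1 ≠ 0 := ne_of_gt hr
  apply Matrix.inv_eq_right_inv
  rw [gBianchiI, Matrix.diagonal_mul_diagonal]
  ext i j
  fin_cases i <;> fin_cases j <;>
    simp [Matrix.diagonal_apply, Matrix.one_apply, bBI_sq ht, aBI_sq ht] <;>
    (try field_simp) <;> ring

def ΓB (α β : ℝ) (a b c : Fin 4) (x : Pt) : ℝ :=
  if a = 0 ∧ b = 1 ∧ c = 1 then -(2/3) * cB α (x 0) else
  if a = 0 ∧ b = 2 ∧ c = 2 then -(2/3) * cB α (x 0) * (x 1)^2 else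
  if a = 0 ∧ b = 3 ∧ c = 3 then
    -((β - x 0) / cB α (x 0)^2) + (1/3) * ((β - x 0)^2 / cB α (x 0)^5) else
  if a = 1 ∧ ((b = 0 ∧ c = 1) ∨ (b = 1 ∧ c = 0)) then -(2/3) / cB α (x 0)^3 else
  if a = 1 ∧ b = 2 ∧ c = 2 then -(x 1) else
  if a = 2 ∧ ((b = 0 ∧ c = 2) ∨ (b = 2 ∧ c = 0)) then -(2/3) / cB α (x 0)^3 else
  if a = 2 ∧ ((b = 1 ∧ c = 2) ∨ (b = 2 ∧ c = 1)) then (x 1)⁻¹ else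
  if a = 3 ∧ ((b = 0 ∧ c = 3) ∨ (b = 3 ∧ c = 0)) then
    1/(3 * cB α (x 0)^3) - 1/(β - x 0) else 0

lemma finmk0 : (⟨0, by omega⟩ : Fin 4) = 0 := rfl
lemma finmk1 : (⟨1, by omega⟩ : Fin 4) = 1 := rfl
lemma finmk2 : (⟨2, by omega⟩ : Fin 4) = 2 := rfl
lemma finmk3 : (⟨3, by omega⟩ : Fin 4) = 3 := rfl

set_option maxHeartbeats 2000000 in
lemma christoffel_onU (hx : x ∈ U α β) (a b c : Fin 4) :
    christoffel (gBianchiI α β) x a b c = ΓB α β a b c x := by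
  obtain ⟨ht, htb, hr⟩ := hx
  have hc := (cB_pos ht).ne'
  have hw : β - x 0 ≠ 0 := sub_ne_zero.mpr (ne_of_gt htb)
  have hrne : x 1 ≠ 0 := ne_of_gt hr
  fin_cases a <;> fin_cases b <;> fin_cases c <;>
  · rw [christoffel, ginv_eq ⟨ht, htb, hr⟩]
    simp only [finmk0, finmk1, finmk2, finmk3, Fin.sum_univ_four,
      gE00, gE01, gE02, gE03, gE10, gE11, gE12, gE13,
      gE20, gE21, gE22, gE23, gE30, gE31, gE32, gE33,
      pd_const, pd_g11 ht, pd_g22 ht, pd_g33 ht htb]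
    simp [ΓB]
    try field_simp
    try ring

lemma pdG1 (ht : x 0 < α) (i : Fin 4) :
    pd i (fun y : Pt => -(2/3) * cB α (y 0)) x =
      if i = 0 then 2 / (9 * cB α (x 0) ^ 2) else 0 := by
  have h := HasDerivAt.const_mul (-(2/3) : ℝ) (hasDerivAt_cB ht)
  rw [pd_comp0 h i]
  have hc := (cB_pos ht).ne'
  split_ifs <;> [skip; rfl]
  field_simp
  ring

lemma pdG2 (ht : x 0 < α) (i : Fin 4) :
    pd i (fun y : Pt => -(2/3) * cB α (y 0) * (y 1) ^ 2) x =
      if i = 0 then 2 * (x 1) ^ 2 / (9 * cB α (x 0) ^ 2) else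
      if i = 1 then -(4/3) * cB α (x 0) * x 1 else 0 := by
  have hc := (cB_pos ht).ne'
  have h1 := HasDerivAt.const_mul (-(2/3) : ℝ) (hasDerivAt_cB ht)
  have hf : DifferentiableAt ℝ (fun y : Pt => -(2/3) * cB α (y 0)) x :=
    diffAt_comp0 h1.differentiableAt
  have hg : DifferentiableAt ℝ (fun y : Pt => (y 1) ^ 2) x :=
    diffAt_comp1 (hasDerivAt_pow 2 (x 1)).differentiableAt
  have h := pd_mul hf hg i
  rw [show (fun y : Pt => -(2/3) * cB α (y 0) * (y 1) ^ 2)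
      = (fun y : Pt => (fun y : Pt => -(2/3) * cB α (y 0)) y * (fun y : Pt => (y 1) ^ 2) y)
      from rfl, h, pd_comp0 h1 i, pd_comp1 (hasDerivAt_pow 2 (x 1)) i]
  split_ifs <;> first
    | (exfalso; simp_all; done)
    | ring
    | (field_simp; ring)
    | (field_simp; left; ring)
    | simp_all

lemma pdG3 (ht : x 0 < α) (i : Fin 4) :
    pd i (fun y : Pt =>
        -((β - y 0) / cB α (y 0) ^ 2) + 1/3 * ((β - y 0) ^ 2 / cB α (y 0) ^ 5)) x =
      if i = 0 then 1 / cB α (x 0) ^ 2 - 4/3 * (β - x 0) / cB α (x 0) ^ 5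
        + 5/9 * (β - x 0) ^ 2 / cB α (x 0) ^ 8 else 0 := by
  have hc := (cB_pos ht).ne'
  have hw : HasDerivAt (fun t : ℝ => β - t) (-1) (x 0) := by
    simpa using (hasDerivAt_id (x 0)).const_sub β
  have hw2 : HasDerivAt (fun t : ℝ => (β - t) ^ 2) (2 * (β - x 0) ^ 1 * (-1)) (x 0) := hw.pow 2
  have hc2 := (hasDerivAt_cB ht).fun_pow 2
  have hc5 := (hasDerivAt_cB ht).fun_pow 5
  have hd1 := (hw.fun_div hc2 (pow_ne_zero 2 hc)).fun_neg
  have hd2 := HasDerivAt.const_mul ((1:ℝ)/3) (hw2.fun_div hc5 (pow_ne_zero 5 hc))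
  have h := hd1.fun_add hd2
  rw [pd_comp0 h i]
  split_ifs <;> [skip; rfl]
  field_simp
  ring

lemma pdG4 (ht : x 0 < α) (i : Fin 4) :
    pd i (fun y : Pt => -(2/3) / cB α (y 0) ^ 3) x =
      if i = 0 then -(2/3) / cB α (x 0) ^ 6 else 0 := by
  have hc := (cB_pos ht).ne'
  have h := (hasDerivAt_const (x 0) (-(2/3) : ℝ)).fun_div
    ((hasDerivAt_cB ht).fun_pow 3) (pow_ne_zero 3 hc)
  rw [pd_comp0 h i]
  split_ifs <;> [skip; rfl]
  field_simp
  ring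

lemma pdG5 (i : Fin 4) :
    pd i (fun y : Pt => -(y 1)) x = if i = 1 then -1 else 0 := by
  have h := (hasDerivAt_id' (x 1)).fun_neg
  exact pd_comp1 (by simpa using h) i

lemma pdG6 (hr : 0 < x 1) (i : Fin 4) :
    pd i (fun y : Pt => (y 1)⁻¹) x = if i = 1 then -(1 / (x 1) ^ 2) else 0 := by
  have h := hasDerivAt_inv (ne_of_gt hr)
  rw [pd_comp1 h i]
  split_ifs <;> [skip; rfl]
  field_simp

lemma pdG7 (ht : x 0 < α) (htb : x 0 < β) (i : Fin 4) :
    pd i (fun y : Pt => 1 / (3 * cB α (y 0) ^ 3) - 1 / (β - y 0)) x =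
      if i = 0 then 1 / (3 * cB α (x 0) ^ 6) - 1 / (β - x 0) ^ 2 else 0 := by
  have hc := (cB_pos ht).ne'
  have hwne : β - x 0 ≠ 0 := sub_ne_zero.mpr (ne_of_gt htb)
  have hw : HasDerivAt (fun t : ℝ => β - t) (-1) (x 0) := by
    simpa using (hasDerivAt_id (x 0)).const_sub β
  have h3 := HasDerivAt.const_mul (3:ℝ) ((hasDerivAt_cB ht).fun_pow 3)
  have hne3 : 3 * cB α (x 0) ^ 3 ≠ 0 := by positivity
  have hd1 := (hasDerivAt_const (x 0) (1:ℝ)).fun_div h3 hne3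
  have hd2 := (hasDerivAt_const (x 0) (1:ℝ)).fun_div hw hwne
  have h := hd1.fun_sub hd2
  rw [pd_comp0 h i]
  split_ifs <;> [skip; rfl]
  field_simp
  ring

lemma pdC000 (hx : x ∈ U α β) (i : Fin 4) :
    pd i (fun y => christoffel (gBianchiI α β) y 0 0 0) x = 0 := by
  rw [pd_congr_open (isOpen_U α β) hx (fun y hy => christoffel_onU hy 0 0 0)]
  rw [show (ΓB α β 0 0 0 : Pt → ℝ) = (fun _ : Pt => (0:ℝ)) from rfl]
  exact pd_const i x 0

lemma pdC001 (hx : x ∈ U α β) (i : Fin 4) :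
    pd i (fun y => christoffel (gBianchiI α β) y 0 0 1) x = 0 := by
  rw [pd_congr_open (isOpen_U α β) hx (fun y hy => christoffel_onU hy 0 0 1)]
  rw [show (ΓB α β 0 0 1 : Pt → ℝ) = (fun _ : Pt => (0:ℝ)) from rfl]
  exact pd_const i x 0

lemma pdC002 (hx : x ∈ U α β) (i : Fin 4) :
    pd i (fun y => christoffel (gBianchiI α β) y 0 0 2) x = 0 := by
  rw [pd_congr_open (isOpen_U α β) hx (fun y hy => christoffel_onU hy 0 0 2)]
  rw [show (ΓB α β 0 0 2 : Pt → ℝ) = (fun _ : Pt => (0:ℝ)) from rfl]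
  exact pd_const i x 0

lemma pdC003 (hx : x ∈ U α β) (i : Fin 4) :
    pd i (fun y => christoffel (gBianchiI α β) y 0 0 3) x = 0 := by
  rw [pd_congr_open (isOpen_U α β) hx (fun y hy => christoffel_onU hy 0 0 3)]
  rw [show (ΓB α β 0 0 3 : Pt → ℝ) = (fun _ : Pt => (0:ℝ)) from rfl]
  exact pd_const i x 0

lemma pdC010 (hx : x ∈ U α β) (i : Fin 4) :
    pd i (fun y => christoffel (gBianchiI α β) y 0 1 0) x = 0 := by
  rw [pd_congr_open (isOpen_U α β) hx (fun y hy => christoffel_onU hy 0 1 0)]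
  rw [show (ΓB α β 0 1 0 : Pt → ℝ) = (fun _ : Pt => (0:ℝ)) from rfl]
  exact pd_const i x 0

lemma pdC011 (hx : x ∈ U α β) (i : Fin 4) :
    pd i (fun y => christoffel (gBianchiI α β) y 0 1 1) x = if i = 0 then 2 / (9 * cB α (x 0) ^ 2) else 0 := by
  rw [pd_congr_open (isOpen_U α β) hx (fun y hy => christoffel_onU hy 0 1 1)]
  rw [show (ΓB α β 0 1 1 : Pt → ℝ) = (fun y : Pt => -(2/3) * cB α (y 0)) from rfl]
  exact pdG1 hx.1 i

lemma pdC012 (hx : x ∈ U α β) (i : Fin 4) :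
    pd i (fun y => christoffel (gBianchiI α β) y 0 1 2) x = 0 := by
  rw [pd_congr_open (isOpen_U α β) hx (fun y hy => christoffel_onU hy 0 1 2)]
  rw [show (ΓB α β 0 1 2 : Pt → ℝ) = (fun _ : Pt => (0:ℝ)) from rfl]
  exact pd_const i x 0

lemma pdC013 (hx : x ∈ U α β) (i : Fin 4) :
    pd i (fun y => christoffel (gBianchiI α β) y 0 1 3) x = 0 := by
  rw [pd_congr_open (isOpen_U α β) hx (fun y hy => christoffel_onU hy 0 1 3)]
  rw [show (ΓB α β 0 1 3 : Pt → ℝ) = (fun _ : Pt => (0:ℝ)) from rfl]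
  exact pd_const i x 0

lemma pdC020 (hx : x ∈ U α β) (i : Fin 4) :
    pd i (fun y => christoffel (gBianchiI α β) y 0 2 0) x = 0 := by
  rw [pd_congr_open (isOpen_U α β) hx (fun y hy => christoffel_onU hy 0 2 0)]
  rw [show (ΓB α β 0 2 0 : Pt → ℝ) = (fun _ : Pt => (0:ℝ)) from rfl]
  exact pd_const i x 0

lemma pdC021 (hx : x ∈ U α β) (i : Fin 4) :
    pd i (fun y => christoffel (gBianchiI α β) y 0 2 1) x = 0 := by
  rw [pd_congr_open (isOpen_U α β) hx (fun y hy => christoffel_onU hy 0 2 1)]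
  rw [show (ΓB α β 0 2 1 : Pt → ℝ) = (fun _ : Pt => (0:ℝ)) from rfl]
  exact pd_const i x 0

lemma pdC022 (hx : x ∈ U α β) (i : Fin 4) :
    pd i (fun y => christoffel (gBianchiI α β) y 0 2 2) x = if i = 0 then 2 * (x 1) ^ 2 / (9 * cB α (x 0) ^ 2) else if i = 1 then -(4/3) * cB α (x 0) * x 1 else 0 := by
  rw [pd_congr_open (isOpen_U α β) hx (fun y hy => christoffel_onU hy 0 2 2)]
  rw [show (ΓB α β 0 2 2 : Pt → ℝ) = (fun y : Pt => -(2/3) * cB α (y 0) * (y 1) ^ 2) from rfl]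
  exact pdG2 hx.1 i

lemma pdC023 (hx : x ∈ U α β) (i : Fin 4) :
    pd i (fun y => christoffel (gBianchiI α β) y 0 2 3) x = 0 := by
  rw [pd_congr_open (isOpen_U α β) hx (fun y hy => christoffel_onU hy 0 2 3)]
  rw [show (ΓB α β 0 2 3 : Pt → ℝ) = (fun _ : Pt => (0:ℝ)) from rfl]
  exact pd_const i x 0

lemma pdC030 (hx : x ∈ U α β) (i : Fin 4) :
    pd i (fun y => christoffel (gBianchiI α β) y 0 3 0) x = 0 := by
  rw [pd_congr_open (isOpen_U α β) hx (fun y hy => christoffel_onU hy 0 3 0)]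
  rw [show (ΓB α β 0 3 0 : Pt → ℝ) = (fun _ : Pt => (0:ℝ)) from rfl]
  exact pd_const i x 0

lemma pdC031 (hx : x ∈ U α β) (i : Fin 4) :
    pd i (fun y => christoffel (gBianchiI α β) y 0 3 1) x = 0 := by
  rw [pd_congr_open (isOpen_U α β) hx (fun y hy => christoffel_onU hy 0 3 1)]
  rw [show (ΓB α β 0 3 1 : Pt → ℝ) = (fun _ : Pt => (0:ℝ)) from rfl]
  exact pd_const i x 0

lemma pdC032 (hx : x ∈ U α β) (i : Fin 4) :
    pd i (fun y => christoffel (gBianchiI α β) y 0 3 2) x = 0 := by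
  rw [pd_congr_open (isOpen_U α β) hx (fun y hy => christoffel_onU hy 0 3 2)]
  rw [show (ΓB α β 0 3 2 : Pt → ℝ) = (fun _ : Pt => (0:ℝ)) from rfl]
  exact pd_const i x 0

lemma pdC033 (hx : x ∈ U α β) (i : Fin 4) :
    pd i (fun y => christoffel (gBianchiI α β) y 0 3 3) x = if i = 0 then 1 / cB α (x 0) ^ 2 - 4/3 * (β - x 0) / cB α (x 0) ^ 5 + 5/9 * (β - x 0) ^ 2 / cB α (x 0) ^ 8 else 0 := by
  rw [pd_congr_open (isOpen_U α β) hx (fun y hy => christoffel_onU hy 0 3 3)]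
  rw [show (ΓB α β 0 3 3 : Pt → ℝ) = (fun y : Pt => -((β - y 0) / cB α (y 0) ^ 2) + 1/3 * ((β - y 0) ^ 2 / cB α (y 0) ^ 5)) from rfl]
  exact pdG3 hx.1 i

lemma pdC100 (hx : x ∈ U α β) (i : Fin 4) :
    pd i (fun y => christoffel (gBianchiI α β) y 1 0 0) x = 0 := by
  rw [pd_congr_open (isOpen_U α β) hx (fun y hy => christoffel_onU hy 1 0 0)]
  rw [show (ΓB α β 1 0 0 : Pt → ℝ) = (fun _ : Pt => (0:ℝ)) from rfl]
  exact pd_const i x 0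

lemma pdC101 (hx : x ∈ U α β) (i : Fin 4) :
    pd i (fun y => christoffel (gBianchiI α β) y 1 0 1) x = if i = 0 then -(2/3) / cB α (x 0) ^ 6 else 0 := by
  rw [pd_congr_open (isOpen_U α β) hx (fun y hy => christoffel_onU hy 1 0 1)]
  rw [show (ΓB α β 1 0 1 : Pt → ℝ) = (fun y : Pt => -(2/3) / cB α (y 0) ^ 3) from rfl]
  exact pdG4 hx.1 i

lemma pdC102 (hx : x ∈ U α β) (i : Fin 4) :
    pd i (fun y => christoffel (gBianchiI α β) y 1 0 2) x = 0 := by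
  rw [pd_congr_open (isOpen_U α β) hx (fun y hy => christoffel_onU hy 1 0 2)]
  rw [show (ΓB α β 1 0 2 : Pt → ℝ) = (fun _ : Pt => (0:ℝ)) from rfl]
  exact pd_const i x 0

lemma pdC103 (hx : x ∈ U α β) (i : Fin 4) :
    pd i (fun y => christoffel (gBianchiI α β) y 1 0 3) x = 0 := by
  rw [pd_congr_open (isOpen_U α β) hx (fun y hy => christoffel_onU hy 1 0 3)]
  rw [show (ΓB α β 1 0 3 : Pt → ℝ) = (fun _ : Pt => (0:ℝ)) from rfl]
  exact pd_const i x 0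

lemma pdC110 (hx : x ∈ U α β) (i : Fin 4) :
    pd i (fun y => christoffel (gBianchiI α β) y 1 1 0) x = if i = 0 then -(2/3) / cB α (x 0) ^ 6 else 0 := by
  rw [pd_congr_open (isOpen_U α β) hx (fun y hy => christoffel_onU hy 1 1 0)]
  rw [show (ΓB α β 1 1 0 : Pt → ℝ) = (fun y : Pt => -(2/3) / cB α (y 0) ^ 3) from rfl]
  exact pdG4 hx.1 i

lemma pdC111 (hx : x ∈ U α β) (i : Fin 4) :
    pd i (fun y => christoffel (gBianchiI α β) y 1 1 1) x = 0 := by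
  rw [pd_congr_open (isOpen_U α β) hx (fun y hy => christoffel_onU hy 1 1 1)]
  rw [show (ΓB α β 1 1 1 : Pt → ℝ) = (fun _ : Pt => (0:ℝ)) from rfl]
  exact pd_const i x 0

lemma pdC112 (hx : x ∈ U α β) (i : Fin 4) :
    pd i (fun y => christoffel (gBianchiI α β) y 1 1 2) x = 0 := by
  rw [pd_congr_open (isOpen_U α β) hx (fun y hy => christoffel_onU hy 1 1 2)]
  rw [show (ΓB α β 1 1 2 : Pt → ℝ) = (fun _ : Pt => (0:ℝ)) from rfl]
  exact pd_const i x 0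

lemma pdC113 (hx : x ∈ U α β) (i : Fin 4) :
    pd i (fun y => christoffel (gBianchiI α β) y 1 1 3) x = 0 := by
  rw [pd_congr_open (isOpen_U α β) hx (fun y hy => christoffel_onU hy 1 1 3)]
  rw [show (ΓB α β 1 1 3 : Pt → ℝ) = (fun _ : Pt => (0:ℝ)) from rfl]
  exact pd_const i x 0

lemma pdC120 (hx : x ∈ U α β) (i : Fin 4) :
    pd i (fun y => christoffel (gBianchiI α β) y 1 2 0) x = 0 := by
  rw [pd_congr_open (isOpen_U α β) hx (fun y hy => christoffel_onU hy 1 2 0)]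
  rw [show (ΓB α β 1 2 0 : Pt → ℝ) = (fun _ : Pt => (0:ℝ)) from rfl]
  exact pd_const i x 0

lemma pdC121 (hx : x ∈ U α β) (i : Fin 4) :
    pd i (fun y => christoffel (gBianchiI α β) y 1 2 1) x = 0 := by
  rw [pd_congr_open (isOpen_U α β) hx (fun y hy => christoffel_onU hy 1 2 1)]
  rw [show (ΓB α β 1 2 1 : Pt → ℝ) = (fun _ : Pt => (0:ℝ)) from rfl]
  exact pd_const i x 0

lemma pdC122 (hx : x ∈ U α β) (i : Fin 4) :
    pd i (fun y => christoffel (gBianchiI α β) y 1 2 2) x = if i = 1 then -1 else 0 := by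
  rw [pd_congr_open (isOpen_U α β) hx (fun y hy => christoffel_onU hy 1 2 2)]
  rw [show (ΓB α β 1 2 2 : Pt → ℝ) = (fun y : Pt => -(y 1)) from rfl]
  exact pdG5 i

lemma pdC123 (hx : x ∈ U α β) (i : Fin 4) :
    pd i (fun y => christoffel (gBianchiI α β) y 1 2 3) x = 0 := by
  rw [pd_congr_open (isOpen_U α β) hx (fun y hy => christoffel_onU hy 1 2 3)]
  rw [show (ΓB α β 1 2 3 : Pt → ℝ) = (fun _ : Pt => (0:ℝ)) from rfl]
  exact pd_const i x 0

lemma pdC130 (hx : x ∈ U α β) (i : Fin 4) :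
    pd i (fun y => christoffel (gBianchiI α β) y 1 3 0) x = 0 := by
  rw [pd_congr_open (isOpen_U α β) hx (fun y hy => christoffel_onU hy 1 3 0)]
  rw [show (ΓB α β 1 3 0 : Pt → ℝ) = (fun _ : Pt => (0:ℝ)) from rfl]
  exact pd_const i x 0

lemma pdC131 (hx : x ∈ U α β) (i : Fin 4) :
    pd i (fun y => christoffel (gBianchiI α β) y 1 3 1) x = 0 := by
  rw [pd_congr_open (isOpen_U α β) hx (fun y hy => christoffel_onU hy 1 3 1)]
  rw [show (ΓB α β 1 3 1 : Pt → ℝ) = (fun _ : Pt => (0:ℝ)) from rfl]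
  exact pd_const i x 0

lemma pdC132 (hx : x ∈ U α β) (i : Fin 4) :
    pd i (fun y => christoffel (gBianchiI α β) y 1 3 2) x = 0 := by
  rw [pd_congr_open (isOpen_U α β) hx (fun y hy => christoffel_onU hy 1 3 2)]
  rw [show (ΓB α β 1 3 2 : Pt → ℝ) = (fun _ : Pt => (0:ℝ)) from rfl]
  exact pd_const i x 0

lemma pdC133 (hx : x ∈ U α β) (i : Fin 4) :
    pd i (fun y => christoffel (gBianchiI α β) y 1 3 3) x = 0 := by
  rw [pd_congr_open (isOpen_U α β) hx (fun y hy => christoffel_onU hy 1 3 3)]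
  rw [show (ΓB α β 1 3 3 : Pt → ℝ) = (fun _ : Pt => (0:ℝ)) from rfl]
  exact pd_const i x 0

lemma pdC200 (hx : x ∈ U α β) (i : Fin 4) :
    pd i (fun y => christoffel (gBianchiI α β) y 2 0 0) x = 0 := by
  rw [pd_congr_open (isOpen_U α β) hx (fun y hy => christoffel_onU hy 2 0 0)]
  rw [show (ΓB α β 2 0 0 : Pt → ℝ) = (fun _ : Pt => (0:ℝ)) from rfl]
  exact pd_const i x 0

lemma pdC201 (hx : x ∈ U α β) (i : Fin 4) :
    pd i (fun y => christoffel (gBianchiI α β) y 2 0 1) x = 0 := by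
  rw [pd_congr_open (isOpen_U α β) hx (fun y hy => christoffel_onU hy 2 0 1)]
  rw [show (ΓB α β 2 0 1 : Pt → ℝ) = (fun _ : Pt => (0:ℝ)) from rfl]
  exact pd_const i x 0

lemma pdC202 (hx : x ∈ U α β) (i : Fin 4) :
    pd i (fun y => christoffel (gBianchiI α β) y 2 0 2) x = if i = 0 then -(2/3) / cB α (x 0) ^ 6 else 0 := by
  rw [pd_congr_open (isOpen_U α β) hx (fun y hy => christoffel_onU hy 2 0 2)]
  rw [show (ΓB α β 2 0 2 : Pt → ℝ) = (fun y : Pt => -(2/3) / cB α (y 0) ^ 3) from rfl]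
  exact pdG4 hx.1 i

lemma pdC203 (hx : x ∈ U α β) (i : Fin 4) :
    pd i (fun y => christoffel (gBianchiI α β) y 2 0 3) x = 0 := by
  rw [pd_congr_open (isOpen_U α β) hx (fun y hy => christoffel_onU hy 2 0 3)]
  rw [show (ΓB α β 2 0 3 : Pt → ℝ) = (fun _ : Pt => (0:ℝ)) from rfl]
  exact pd_const i x 0

lemma pdC210 (hx : x ∈ U α β) (i : Fin 4) :
    pd i (fun y => christoffel (gBianchiI α β) y 2 1 0) x = 0 := by
  rw [pd_congr_open (isOpen_U α β) hx (fun y hy => christoffel_onU hy 2 1 0)]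
  rw [show (ΓB α β 2 1 0 : Pt → ℝ) = (fun _ : Pt => (0:ℝ)) from rfl]
  exact pd_const i x 0

lemma pdC211 (hx : x ∈ U α β) (i : Fin 4) :
    pd i (fun y => christoffel (gBianchiI α β) y 2 1 1) x = 0 := by
  rw [pd_congr_open (isOpen_U α β) hx (fun y hy => christoffel_onU hy 2 1 1)]
  rw [show (ΓB α β 2 1 1 : Pt → ℝ) = (fun _ : Pt => (0:ℝ)) from rfl]
  exact pd_const i x 0

lemma pdC212 (hx : x ∈ U α β) (i : Fin 4) :
    pd i (fun y => christoffel (gBianchiI α β) y 2 1 2) x = if i = 1 then -(1 / (x 1) ^ 2) else 0 := by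
  rw [pd_congr_open (isOpen_U α β) hx (fun y hy => christoffel_onU hy 2 1 2)]
  rw [show (ΓB α β 2 1 2 : Pt → ℝ) = (fun y : Pt => (y 1)⁻¹) from rfl]
  exact pdG6 hx.2.2 i

lemma pdC213 (hx : x ∈ U α β) (i : Fin 4) :
    pd i (fun y => christoffel (gBianchiI α β) y 2 1 3) x = 0 := by
  rw [pd_congr_open (isOpen_U α β) hx (fun y hy => christoffel_onU hy 2 1 3)]
  rw [show (ΓB α β 2 1 3 : Pt → ℝ) = (fun _ : Pt => (0:ℝ)) from rfl]
  exact pd_const i x 0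

lemma pdC220 (hx : x ∈ U α β) (i : Fin 4) :
    pd i (fun y => christoffel (gBianchiI α β) y 2 2 0) x = if i = 0 then -(2/3) / cB α (x 0) ^ 6 else 0 := by
  rw [pd_congr_open (isOpen_U α β) hx (fun y hy => christoffel_onU hy 2 2 0)]
  rw [show (ΓB α β 2 2 0 : Pt → ℝ) = (fun y : Pt => -(2/3) / cB α (y 0) ^ 3) from rfl]
  exact pdG4 hx.1 i

lemma pdC221 (hx : x ∈ U α β) (i : Fin 4) :
    pd i (fun y => christoffel (gBianchiI α β) y 2 2 1) x = if i = 1 then -(1 / (x 1) ^ 2) else 0 := by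
  rw [pd_congr_open (isOpen_U α β) hx (fun y hy => christoffel_onU hy 2 2 1)]
  rw [show (ΓB α β 2 2 1 : Pt → ℝ) = (fun y : Pt => (y 1)⁻¹) from rfl]
  exact pdG6 hx.2.2 i

lemma pdC222 (hx : x ∈ U α β) (i : Fin 4) :
    pd i (fun y => christoffel (gBianchiI α β) y 2 2 2) x = 0 := by
  rw [pd_congr_open (isOpen_U α β) hx (fun y hy => christoffel_onU hy 2 2 2)]
  rw [show (ΓB α β 2 2 2 : Pt → ℝ) = (fun _ : Pt => (0:ℝ)) from rfl]
  exact pd_const i x 0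

lemma pdC223 (hx : x ∈ U α β) (i : Fin 4) :
    pd i (fun y => christoffel (gBianchiI α β) y 2 2 3) x = 0 := by
  rw [pd_congr_open (isOpen_U α β) hx (fun y hy => christoffel_onU hy 2 2 3)]
  rw [show (ΓB α β 2 2 3 : Pt → ℝ) = (fun _ : Pt => (0:ℝ)) from rfl]
  exact pd_const i x 0

lemma pdC230 (hx : x ∈ U α β) (i : Fin 4) :
    pd i (fun y => christoffel (gBianchiI α β) y 2 3 0) x = 0 := by
  rw [pd_congr_open (isOpen_U α β) hx (fun y hy => christoffel_onU hy 2 3 0)]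
  rw [show (ΓB α β 2 3 0 : Pt → ℝ) = (fun _ : Pt => (0:ℝ)) from rfl]
  exact pd_const i x 0

lemma pdC231 (hx : x ∈ U α β) (i : Fin 4) :
    pd i (fun y => christoffel (gBianchiI α β) y 2 3 1) x = 0 := by
  rw [pd_congr_open (isOpen_U α β) hx (fun y hy => christoffel_onU hy 2 3 1)]
  rw [show (ΓB α β 2 3 1 : Pt → ℝ) = (fun _ : Pt => (0:ℝ)) from rfl]
  exact pd_const i x 0

lemma pdC232 (hx : x ∈ U α β) (i : Fin 4) :
    pd i (fun y => christoffel (gBianchiI α β) y 2 3 2) x = 0 := by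
  rw [pd_congr_open (isOpen_U α β) hx (fun y hy => christoffel_onU hy 2 3 2)]
  rw [show (ΓB α β 2 3 2 : Pt → ℝ) = (fun _ : Pt => (0:ℝ)) from rfl]
  exact pd_const i x 0

lemma pdC233 (hx : x ∈ U α β) (i : Fin 4) :
    pd i (fun y => christoffel (gBianchiI α β) y 2 3 3) x = 0 := by
  rw [pd_congr_open (isOpen_U α β) hx (fun y hy => christoffel_onU hy 2 3 3)]
  rw [show (ΓB α β 2 3 3 : Pt → ℝ) = (fun _ : Pt => (0:ℝ)) from rfl]
  exact pd_const i x 0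

lemma pdC300 (hx : x ∈ U α β) (i : Fin 4) :
    pd i (fun y => christoffel (gBianchiI α β) y 3 0 0) x = 0 := by
  rw [pd_congr_open (isOpen_U α β) hx (fun y hy => christoffel_onU hy 3 0 0)]
  rw [show (ΓB α β 3 0 0 : Pt → ℝ) = (fun _ : Pt => (0:ℝ)) from rfl]
  exact pd_const i x 0

lemma pdC301 (hx : x ∈ U α β) (i : Fin 4) :
    pd i (fun y => christoffel (gBianchiI α β) y 3 0 1) x = 0 := by
  rw [pd_congr_open (isOpen_U α β) hx (fun y hy => christoffel_onU hy 3 0 1)]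
  rw [show (ΓB α β 3 0 1 : Pt → ℝ) = (fun _ : Pt => (0:ℝ)) from rfl]
  exact pd_const i x 0

lemma pdC302 (hx : x ∈ U α β) (i : Fin 4) :
    pd i (fun y => christoffel (gBianchiI α β) y 3 0 2) x = 0 := by
  rw [pd_congr_open (isOpen_U α β) hx (fun y hy => christoffel_onU hy 3 0 2)]
  rw [show (ΓB α β 3 0 2 : Pt → ℝ) = (fun _ : Pt => (0:ℝ)) from rfl]
  exact pd_const i x 0

lemma pdC303 (hx : x ∈ U α β) (i : Fin 4) :
    pd i (fun y => christoffel (gBianchiI α β) y 3 0 3) x = if i = 0 then 1 / (3 * cB α (x 0) ^ 6) - 1 / (β - x 0) ^ 2 else 0 := by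
  rw [pd_congr_open (isOpen_U α β) hx (fun y hy => christoffel_onU hy 3 0 3)]
  rw [show (ΓB α β 3 0 3 : Pt → ℝ) = (fun y : Pt => 1 / (3 * cB α (y 0) ^ 3) - 1 / (β - y 0)) from rfl]
  exact pdG7 hx.1 hx.2.1 i

lemma pdC310 (hx : x ∈ U α β) (i : Fin 4) :
    pd i (fun y => christoffel (gBianchiI α β) y 3 1 0) x = 0 := by
  rw [pd_congr_open (isOpen_U α β) hx (fun y hy => christoffel_onU hy 3 1 0)]
  rw [show (ΓB α β 3 1 0 : Pt → ℝ) = (fun _ : Pt => (0:ℝ)) from rfl]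
  exact pd_const i x 0

lemma pdC311 (hx : x ∈ U α β) (i : Fin 4) :
    pd i (fun y => christoffel (gBianchiI α β) y 3 1 1) x = 0 := by
  rw [pd_congr_open (isOpen_U α β) hx (fun y hy => christoffel_onU hy 3 1 1)]
  rw [show (ΓB α β 3 1 1 : Pt → ℝ) = (fun _ : Pt => (0:ℝ)) from rfl]
  exact pd_const i x 0

lemma pdC312 (hx : x ∈ U α β) (i : Fin 4) :
    pd i (fun y => christoffel (gBianchiI α β) y 3 1 2) x = 0 := by
  rw [pd_congr_open (isOpen_U α β) hx (fun y hy => christoffel_onU hy 3 1 2)]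
  rw [show (ΓB α β 3 1 2 : Pt → ℝ) = (fun _ : Pt => (0:ℝ)) from rfl]
  exact pd_const i x 0

lemma pdC313 (hx : x ∈ U α β) (i : Fin 4) :
    pd i (fun y => christoffel (gBianchiI α β) y 3 1 3) x = 0 := by
  rw [pd_congr_open (isOpen_U α β) hx (fun y hy => christoffel_onU hy 3 1 3)]
  rw [show (ΓB α β 3 1 3 : Pt → ℝ) = (fun _ : Pt => (0:ℝ)) from rfl]
  exact pd_const i x 0

lemma pdC320 (hx : x ∈ U α β) (i : Fin 4) :
    pd i (fun y => christoffel (gBianchiI α β) y 3 2 0) x = 0 := by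
  rw [pd_congr_open (isOpen_U α β) hx (fun y hy => christoffel_onU hy 3 2 0)]
  rw [show (ΓB α β 3 2 0 : Pt → ℝ) = (fun _ : Pt => (0:ℝ)) from rfl]
  exact pd_const i x 0

lemma pdC321 (hx : x ∈ U α β) (i : Fin 4) :
    pd i (fun y => christoffel (gBianchiI α β) y 3 2 1) x = 0 := by
  rw [pd_congr_open (isOpen_U α β) hx (fun y hy => christoffel_onU hy 3 2 1)]
  rw [show (ΓB α β 3 2 1 : Pt → ℝ) = (fun _ : Pt => (0:ℝ)) from rfl]
  exact pd_const i x 0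

lemma pdC322 (hx : x ∈ U α β) (i : Fin 4) :
    pd i (fun y => christoffel (gBianchiI α β) y 3 2 2) x = 0 := by
  rw [pd_congr_open (isOpen_U α β) hx (fun y hy => christoffel_onU hy 3 2 2)]
  rw [show (ΓB α β 3 2 2 : Pt → ℝ) = (fun _ : Pt => (0:ℝ)) from rfl]
  exact pd_const i x 0

lemma pdC323 (hx : x ∈ U α β) (i : Fin 4) :
    pd i (fun y => christoffel (gBianchiI α β) y 3 2 3) x = 0 := by
  rw [pd_congr_open (isOpen_U α β) hx (fun y hy => christoffel_onU hy 3 2 3)]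
  rw [show (ΓB α β 3 2 3 : Pt → ℝ) = (fun _ : Pt => (0:ℝ)) from rfl]
  exact pd_const i x 0

lemma pdC330 (hx : x ∈ U α β) (i : Fin 4) :
    pd i (fun y => christoffel (gBianchiI α β) y 3 3 0) x = if i = 0 then 1 / (3 * cB α (x 0) ^ 6) - 1 / (β - x 0) ^ 2 else 0 := by
  rw [pd_congr_open (isOpen_U α β) hx (fun y hy => christoffel_onU hy 3 3 0)]
  rw [show (ΓB α β 3 3 0 : Pt → ℝ) = (fun y : Pt => 1 / (3 * cB α (y 0) ^ 3) - 1 / (β - y 0)) from rfl]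
  exact pdG7 hx.1 hx.2.1 i

lemma pdC331 (hx : x ∈ U α β) (i : Fin 4) :
    pd i (fun y => christoffel (gBianchiI α β) y 3 3 1) x = 0 := by
  rw [pd_congr_open (isOpen_U α β) hx (fun y hy => christoffel_onU hy 3 3 1)]
  rw [show (ΓB α β 3 3 1 : Pt → ℝ) = (fun _ : Pt => (0:ℝ)) from rfl]
  exact pd_const i x 0

lemma pdC332 (hx : x ∈ U α β) (i : Fin 4) :
    pd i (fun y => christoffel (gBianchiI α β) y 3 3 2) x = 0 := by
  rw [pd_congr_open (isOpen_U α β) hx (fun y hy => christoffel_onU hy 3 3 2)]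
  rw [show (ΓB α β 3 3 2 : Pt → ℝ) = (fun _ : Pt => (0:ℝ)) from rfl]
  exact pd_const i x 0

lemma pdC333 (hx : x ∈ U α β) (i : Fin 4) :
    pd i (fun y => christoffel (gBianchiI α β) y 3 3 3) x = 0 := by
  rw [pd_congr_open (isOpen_U α β) hx (fun y hy => christoffel_onU hy 3 3 3)]
  rw [show (ΓB α β 3 3 3 : Pt → ℝ) = (fun _ : Pt => (0:ℝ)) from rfl]
  exact pd_const i x 0

def RicB (α β : ℝ) (b d : Fin 4) (x : Pt) : ℝ :=
  if b = 0 ∧ d = 0 then 2 / (3 * cB α (x 0) ^ 3 * (β - x 0)) else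
  if b = 1 ∧ d = 1 then 2 * cB α (x 0) / (3 * (β - x 0)) else
  if b = 2 ∧ d = 2 then 2 * cB α (x 0) * (x 1) ^ 2 / (3 * (β - x 0)) else
  if b = 3 ∧ d = 3 then 2 * (β - x 0) / (3 * cB α (x 0) ^ 5) else 0

set_option maxHeartbeats 4000000 in
lemma ricci_eq (hx : x ∈ U α β) (b d : Fin 4) :
    ricci (gBianchiI α β) x b d = RicB α β b d x := by
  obtain ⟨ht, htb, hr⟩ := hx
  have hx' : x ∈ U α β := ⟨ht, htb, hr⟩
  have hc := (cB_pos ht).ne'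
  have hw : β - x 0 ≠ 0 := sub_ne_zero.mpr (ne_of_gt htb)
  have hrne : x 1 ≠ 0 := ne_of_gt hr
  fin_cases b <;> fin_cases d <;>
  · rw [ricci]
    simp only [finmk0, finmk1, finmk2, finmk3, Fin.sum_univ_four, riemann,
      pdC000 hx', pdC001 hx', pdC002 hx', pdC003 hx', pdC010 hx', pdC011 hx', pdC012 hx', pdC013 hx', pdC020 hx', pdC021 hx', pdC022 hx', pdC023 hx', pdC030 hx', pdC031 hx', pdC032 hx', pdC033 hx', pdC100 hx', pdC101 hx', pdC102 hx', pdC103 hx', pdC110 hx', pdC111 hx', pdC112 hx', pdC113 hx', pdC120 hx', pdC121 hx', pdC122 hx', pdC123 hx', pdC130 hx', pdC131 hx', pdC132 hx', pdC133 hx', pdC200 hx', pdC201 hx', pdC202 hx', pdC203 hx', pdC210 hx', pdC211 hx', pdC212 hx', pdC213 hx', pdC220 hx', pdC221 hx', pdC222 hx', pdC223 hx', pdC230 hx', pdC231 hx', pdC232 hx', pdC233 hx', pdC300 hx', pdC301 hx', pdC302 hx', pdC303 hx', pdC310 hx', pdC311 hx', pdC312 hx', pdC313 hx', pdC320 hx',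 pdC321 hx', pdC322 hx', pdC323 hx', pdC330 hx', pdC331 hx', pdC332 hx', pdC333 hx',
      christoffel_onU hx']
    simp [ΓB, RicB]
    try field_simp
    try ring

lemma scalar_eq (hx : x ∈ U α β) :
    scalarCurv (gBianchiI α β) x = 4 / (3 * cB α (x 0) ^ 3 * (β - x 0)) := by
  obtain ⟨ht, htb, hr⟩ := hx
  have hx' : x ∈ U α β := ⟨ht, htb, hr⟩
  have hc := (cB_pos ht).ne'
  have hw : β - x 0 ≠ 0 := sub_ne_zero.mpr (ne_of_gt htb)
  have hrne : x 1 ≠ 0 := ne_of_gt hr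
  rw [scalarCurv]
  simp only [Fin.sum_univ_four, ginv_eq hx', ricci_eq hx']
  simp [RicB]
  field_simp
  ring

lemma einstein_eq (hx : x ∈ U α β) :
    einstein (gBianchiI α β) x =
      (4 / (3 * cB α (x 0) ^ 3 * (β - x 0))) • Matrix.vecMulVec uCov uCov := by
  obtain ⟨ht, htb, hr⟩ := hx
  have hx' : x ∈ U α β := ⟨ht, htb, hr⟩
  have hc := (cB_pos ht).ne'
  have hw : β - x 0 ≠ 0 := sub_ne_zero.mpr (ne_of_gt htb)
  have hrne : x 1 ≠ 0 := ne_of_gt hr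
  ext a b
  fin_cases a <;> fin_cases b <;>
  · simp only [finmk0, finmk1, finmk2, finmk3, einstein, Matrix.of_apply,
      Matrix.smul_apply, Matrix.vecMulVec_apply, smul_eq_mul,
      ricci_eq hx', scalar_eq hx',
      gE00, gE01, gE02, gE03, gE10, gE11, gE12, gE13,
      gE20, gE21, gE22, gE23, gE30, gE31, gE32, gE33]
    simp [RicB, uCov, bBI_sq ht, aBI_sq ht]
    try field_simp
    try ring

/-- The Bianchi I metric with `a(t) = (α-t)^{-1/3}(β-t)`, `b(t) = (α-t)^{2/3}`
is a solution of the Einstein equations with dust source: its Einstein tensor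
satisfies `G_{ab} = ρ u_a u_b` for some nonnegative function `ρ` on the region
`0 ≤ t < min{α,β}` (with `r > 0` for validity of cylindrical coordinates),
where `u = ∂_t`. -/
theorem bianchiI_is_dust_solution (α β : ℝ) (hα : 0 < α) (hβ : 0 < β) :
    ∃ ρ : Pt → ℝ, ∀ x : Pt, 0 ≤ x 0 → x 0 < min α β → 0 < x 1 →
      0 ≤ ρ x ∧ einstein (gBianchiI α β) x = ρ x • Matrix.vecMulVec uCov uCov := by
  refine ⟨fun x => 4 / (3 * (α - x 0) * (β - x 0)), fun x h0 hmin hr => ?_⟩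
  have ht : x 0 < α := lt_of_lt_of_le hmin (min_le_left α β)
  have htb : x 0 < β := lt_of_lt_of_le hmin (min_le_right α β)
  have hx : x ∈ U α β := ⟨ht, htb, hr⟩
  have hs : 0 < α - x 0 := by linarith
  have hw : 0 < β - x 0 := by linarith
  constructor
  · positivity
  · rw [einstein_eq hx, cB_cube ht]

end BianchiIDust

end
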